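/- Let f, g and h be entire functions given by everywhere absolutely convergent vector valued Dirichlet series, and let p ≥ 0, q ≥ 0, m ≥ 0 be integers. Assume 0 < λ_h^{(m,q)}(f) ≤ ρ_h^{(m,q)}(f) < +∞ and 0 < λ_h^{(m,p)}(g) ≤ ρ_h^{(m,p)}(g) < +∞. Then λ_g^{(p,q)}(f) · λ_f^{(q,p)}(g) ≤ 1. Moreover, if f is of regular relative (m,q) Ritt growth with respect to h and g is of regular relative (m,p) Ritt growth with respect to h, then λ_g^{(p,q)}(f) · λ_f^{(q,p)}(g) = 1. -/

import Mathlib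

open Filter Topology

noncomputable section

/-- An entire function given by an everywhere absolutely convergent
vector valued Dirichlet series, with coefficients in a Banach space `E`. -/
structure VVDS (E : Type*) [NormedAddCommGroup E] [NormedSpace ℂ E] [CompleteSpace E] where
  a : ℕ → E
  lam : ℕ → ℝ
  lam_pos : ∀ n, 0 < lam n
  lam_strictMono : StrictMono lam
  lam_tendsto : Tendsto lam atTop atTop
  log_index_bound : ∃ D : ℝ, ∀ᶠ n : ℕ in atTop, Real.log (n : ℝ) / lam n ≤ D
  coeff_decay : Tendsto (fun n => Real.log ‖a n‖ / lam n) atTop atBot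
  abs_conv : ∀ s : ℂ, Summable (fun n => Real.exp (s.re * lam n) * ‖a n‖)

variable {E F G : Type*} [NormedAddCommGroup E] [NormedSpace ℂ E] [CompleteSpace E]
  [NormedAddCommGroup F] [NormedSpace ℂ F] [CompleteSpace F]
  [NormedAddCommGroup G] [NormedSpace ℂ G] [CompleteSpace G]

/-- The entire function defined by the vector valued Dirichlet series. -/
def VVDS.toFun (f : VVDS E) (s : ℂ) : E := ∑' n, Complex.exp (s * (f.lam n : ℂ)) • f.a n

/-- The maximum modulus function `M_f(σ) = sup_t ‖f(σ+it)‖`. -/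
def VVDS.M (f : VVDS E) (σ : ℝ) : ℝ := ⨆ t : ℝ, ‖f.toFun ((σ : ℂ) + (t : ℂ) * Complex.I)‖

/-- The inverse function of the maximum modulus function. -/
def VVDS.Minv (f : VVDS E) (y : ℝ) : ℝ := sInf {σ : ℝ | y ≤ f.M σ}

/-- The (p,q)-th relative Ritt order of `f` with respect to `g`. -/
def relRittOrder (p q : ℕ) (f : VVDS E) (g : VVDS F) : EReal :=
  limsup (fun σ : ℝ =>
    ((Real.log^[p] (g.Minv (f.M σ)) / Real.log^[q] σ : ℝ) : EReal)) atTop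

/-- The (p,q)-th relative Ritt lower order of `f` with respect to `g`. -/
def relRittLowerOrder (p q : ℕ) (f : VVDS E) (g : VVDS F) : EReal :=
  liminf (fun σ : ℝ =>
    ((Real.log^[p] (g.Minv (f.M σ)) / Real.log^[q] σ : ℝ) : EReal)) atTop

/-- The (p,q)-th relative Ritt type of `f` with respect to `g`. -/
def relRittType (p q : ℕ) (f : VVDS E) (g : VVDS F) : EReal :=
  limsup (fun σ : ℝ =>
    ((Real.log^[p-1] (g.Minv (f.M σ)) /
      (Real.log^[q-1] σ) ^ (relRittOrder p q f g).toReal : ℝ) : EReal)) atTop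

/-- The (p,q)-th relative Ritt lower type of `f` with respect to `g`. -/
def relRittLowerType (p q : ℕ) (f : VVDS E) (g : VVDS F) : EReal :=
  liminf (fun σ : ℝ =>
    ((Real.log^[p-1] (g.Minv (f.M σ)) /
      (Real.log^[q-1] σ) ^ (relRittOrder p q f g).toReal : ℝ) : EReal)) atTop

/-- The (p,q)-th relative Ritt weak type of `f` with respect to `g`. -/
def relRittWeakType (p q : ℕ) (f : VVDS E) (g : VVDS F) : EReal :=
  liminf (fun σ : ℝ =>
    ((Real.log^[p-1] (g.Minv (f.M σ)) /
      (Real.log^[q-1] σ) ^ (relRittLowerOrder p q f g).toReal : ℝ) : EReal)) atTop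

/-- The growth indicator `τ̄_g^{(p,q)}(f)`. -/
def relRittUpperWeakType (p q : ℕ) (f : VVDS E) (g : VVDS F) : EReal :=
  limsup (fun σ : ℝ =>
    ((Real.log^[p-1] (g.Minv (f.M σ)) /
      (Real.log^[q-1] σ) ^ (relRittLowerOrder p q f g).toReal : ℝ) : EReal)) atTop

section Basics
namespace VVDS

variable (f : VVDS E)

/-- The majorant sum `S f σ = ∑ e^{σ λₙ} ‖aₙ‖`. -/
def S (σ : ℝ) : ℝ := ∑' n, Real.exp (σ * f.lam n) * ‖f.a n‖

lemma summable_S (σ : ℝ) : Summable (fun n => Real.exp (σ * f.lam n) * ‖f.a n‖) := by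
  simpa using f.abs_conv (σ : ℂ)

lemma summable_term (s : ℂ) :
    Summable (fun n => Complex.exp (s * (f.lam n : ℂ)) • f.a n) := by
  apply Summable.of_norm
  have := f.abs_conv s
  convert this using 2 with n
  rw [norm_smul, Complex.norm_exp]
  congr 2
  simp [Complex.mul_re]

lemma norm_term (s : ℂ) (n : ℕ) :
    ‖Complex.exp (s * (f.lam n : ℂ)) • f.a n‖ = Real.exp (s.re * f.lam n) * ‖f.a n‖ := by
  rw [norm_smul, Complex.norm_exp]
  congr 2
  simp [Complex.mul_re]

lemma norm_toFun_le (s : ℂ) : ‖f.toFun s‖ ≤ f.S s.re := by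
  refine (norm_tsum_le_tsum_norm ?_).trans_eq ?_
  · have := f.abs_conv s
    apply this.congr
    intro n; rw [norm_term]
  · unfold S
    congr 1; ext n; rw [norm_term]

lemma bddAbove_M (σ : ℝ) : BddAbove (Set.range fun t : ℝ => ‖f.toFun ((σ : ℂ) + (t : ℂ) * Complex.I)‖) := by
  refine ⟨f.S σ, ?_⟩
  rintro x ⟨t, rfl⟩
  have := f.norm_toFun_le ((σ : ℂ) + (t : ℂ) * Complex.I)
  simpa using this

lemma norm_le_M (σ t : ℝ) : ‖f.toFun ((σ : ℂ) + (t : ℂ) * Complex.I)‖ ≤ f.M σ :=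
  le_ciSup (f.bddAbove_M σ) t

lemma M_le_S (σ : ℝ) : f.M σ ≤ f.S σ := by
  refine ciSup_le fun t => ?_
  have := f.norm_toFun_le ((σ : ℂ) + (t : ℂ) * Complex.I)
  simpa using this

lemma S_mono : Monotone f.S := by
  intro σ τ hst
  refine Summable.tsum_le_tsum (fun n => ?_) (f.summable_S σ) (f.summable_S τ)
  have h := (f.lam_pos n).le
  gcongr

lemma M_le_S_of_le {σ T : ℝ} (hs : σ ≤ T) : f.M σ ≤ f.S T :=
  (f.M_le_S σ).trans (f.S_mono hs)

end VVDS
end Basics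
namespace VVDS
open MeasureTheory intervalIntegral Complex

variable (f : VVDS E)

lemma bohr (N : ℕ) (σ : ℝ) : Real.exp (σ * f.lam N) * ‖f.a N‖ ≤ f.M σ := by
  classical
  -- twisted terms
  set w : ℕ → ℝ → E := fun n t =>
    (Complex.exp ((σ : ℂ) * f.lam n) * Complex.exp ((Complex.I * ((f.lam n : ℂ) - f.lam N)) * t)) • f.a n with hw
  have hwnorm : ∀ n t, ‖w n t‖ = Real.exp (σ * f.lam n) * ‖f.a n‖ := by
    intro n t
    rw [hw]
    rw [norm_smul, norm_mul, Complex.norm_exp,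
      Complex.norm_exp]
    have h1 : (((σ : ℂ)) * (f.lam n : ℂ)).re = σ * f.lam n := by simp [Complex.mul_re]
    have h2 : ((Complex.I * ((f.lam n : ℂ) - f.lam N)) * (t : ℂ)).re = 0 := by
      simp [Complex.mul_re, Complex.mul_im]
    rw [h1, h2, Real.exp_zero, mul_one]
  -- relating the twisted sum to toFun
  have hsum : ∀ t : ℝ, (∑' n, w n t) =
      Complex.exp (-((t : ℂ) * f.lam N * Complex.I)) • f.toFun ((σ : ℂ) + (t : ℂ) * Complex.I) := by
    intro t
    rw [VVDS.toFun, ← tsum_const_smul'']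
    congr 1; ext n
    show (Complex.exp ((σ : ℂ) * f.lam n) * Complex.exp ((Complex.I * ((f.lam n : ℂ) - f.lam N)) * t)) • f.a n = _
    rw [smul_smul, ← Complex.exp_add, ← Complex.exp_add]
    congr 2
    ring
  have hwsummable : ∀ t : ℝ, Summable (fun n => w n t) := by
    intro t
    apply Summable.of_norm
    exact (f.summable_S σ).congr fun n => (hwnorm n t).symm
  have hwcont : ∀ n, Continuous (fun t : ℝ => w n t) := by
    intro n
    rw [hw]
    apply Continuous.smul ?_ continuous_const
    apply Continuous.mul continuous_const
    exact Complex.continuous_exp.comp (by continuity)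
  -- interchange of sum and integral
  have key : ∀ T : ℝ, 0 < T →
      ∫ t in Set.Ioc (-T) T, (∑' n, w n t) = ∑' n, ∫ t in Set.Ioc (-T) T, w n t := by
    intro T hT
    apply MeasureTheory.integral_tsum
    · exact fun n => (hwcont n).aestronglyMeasurable
    · have hlint : ∀ n, ∫⁻ t in Set.Ioc (-T) T, ‖w n t‖ₑ =
          ENNReal.ofReal (Real.exp (σ * f.lam n) * ‖f.a n‖) * volume (Set.Ioc (-T) T) := by
        intro n
        rw [MeasureTheory.setLIntegral_congr_fun measurableSet_Ioc
          ((fun t _ => by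
            rw [← ofReal_norm, hwnorm]))]
        exact MeasureTheory.setLIntegral_const _ _
      simp only [hlint]
      rw [ENNReal.tsum_mul_right]
      apply ENNReal.mul_ne_top
      · rw [← ENNReal.ofReal_tsum_of_nonneg (fun n => by positivity) (f.summable_S σ)]
        exact ENNReal.ofReal_ne_top
      · exact measure_Ioc_lt_top.ne
  -- the integral of each term
  have hIoc : ∀ (T : ℝ), 0 < T → ∀ n, ∫ t in Set.Ioc (-T) T, w n t =
      (Complex.exp ((σ : ℂ) * f.lam n) *
        ∫ t in (-T)..T, Complex.exp ((Complex.I * ((f.lam n : ℂ) - f.lam N)) * t)) • f.a n := by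
    intro T hT n
    rw [← intervalIntegral.integral_of_le (by linarith : -T ≤ T), hw]
    rw [intervalIntegral.integral_smul_const, intervalIntegral.integral_const_mul]
  have h2T : ∀ T : ℝ, 0 < T → ‖((2*T:ℂ))⁻¹‖ = (2*T)⁻¹ := by
    intro T hT
    rw [norm_inv]
    congr 1
    have : ((2*T : ℝ) : ℂ) = 2*(T:ℂ) := by push_cast; ring
    rw [← this, Complex.norm_real]
    exact abs_of_pos (by linarith)
  have hvalN : ∀ T : ℝ, 0 < T → ((2*T:ℂ))⁻¹ • ∫ t in Set.Ioc (-T) T, w N t =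
      Complex.exp ((σ : ℂ) * f.lam N) • f.a N := by
    intro T hT
    rw [hIoc T hT N]
    have h0 : (Complex.I * ((f.lam N : ℂ) - f.lam N)) = 0 := by rw [sub_self, mul_zero]
    simp only [h0, zero_mul, Complex.exp_zero, intervalIntegral.integral_const]
    rw [smul_smul]
    congr 1
    have hne : ((2*T : ℝ) : ℂ) ≠ 0 := by
      rw [Complex.ofReal_ne_zero]; positivity
    rw [Complex.real_smul]
    push_cast at hne ⊢
    field_simp
    rw [mul_div_cancel_left₀ _ (by exact_mod_cast hT.ne' : (T:ℂ) ≠ 0)]; norm_num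
  have hvalNe : ∀ n, n ≠ N → ∀ T : ℝ, 0 < T →
      ‖((2*T:ℂ))⁻¹ • ∫ t in Set.Ioc (-T) T, w n t‖ ≤
        (2*T)⁻¹ * (Real.exp (σ * f.lam n) * ‖f.a n‖ * (2 / |f.lam n - f.lam N|)) := by
    intro n hn T hT
    have hdne : (Complex.I * ((f.lam n : ℂ) - f.lam N)) ≠ 0 := by
      apply mul_ne_zero Complex.I_ne_zero
      rw [sub_ne_zero]
      exact_mod_cast fun hc => hn (f.lam_strictMono.injective (by exact_mod_cast hc))
    rw [hIoc T hT n, norm_smul, norm_smul, h2T T hT, norm_mul]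
    have habs : ∀ u : ℝ, ‖Complex.exp ((Complex.I * ((f.lam n : ℂ) - f.lam N)) * u)‖ = 1 := by
      intro u
      rw [Complex.norm_exp]
      have : ((Complex.I * ((f.lam n : ℂ) - f.lam N)) * (u:ℂ)).re = 0 := by
        simp [Complex.mul_re, Complex.mul_im]
      rw [this, Real.exp_zero]
    have hJ : ‖∫ t in (-T)..T, Complex.exp ((Complex.I * ((f.lam n : ℂ) - f.lam N)) * t)‖ ≤
        2 / |f.lam n - f.lam N| := by
      rw [integral_exp_mul_complex hdne]
      rw [norm_div]
      have hnum : ‖Complex.exp (Complex.I * ((f.lam n : ℂ) - f.lam N) * T) -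
          Complex.exp (Complex.I * ((f.lam n : ℂ) - f.lam N) * (-T : ℝ))‖ ≤ 2 := by
        refine (norm_sub_le _ _).trans ?_
        rw [habs T, habs (-T)]
        norm_num
      have hden : ‖Complex.I * ((f.lam n : ℂ) - f.lam N)‖ = |f.lam n - f.lam N| := by
        rw [norm_mul, Complex.norm_I, one_mul]
        rw [show ((f.lam n : ℂ) - f.lam N) = ((f.lam n - f.lam N : ℝ) : ℂ) by push_cast; ring]
        exact (Complex.norm_real _).trans (Real.norm_eq_abs _)
      rw [hden]
      have hdpos : 0 < |f.lam n - f.lam N| :=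
        abs_pos.mpr (sub_ne_zero.mpr (fun hc => hn (f.lam_strictMono.injective hc)))
      gcongr
    have hexp : ‖Complex.exp ((σ : ℂ) * f.lam n)‖ = Real.exp (σ * f.lam n) := by
      rw [Complex.norm_exp]
      congr 1
      simp [Complex.mul_re]
    rw [hexp]
    have h1 : Real.exp (σ * f.lam n) * ‖∫ t in (-T)..T,
        Complex.exp ((Complex.I * ((f.lam n : ℂ) - f.lam N)) * t)‖ * ‖f.a n‖ ≤
        Real.exp (σ * f.lam n) * (2 / |f.lam n - f.lam N|) * ‖f.a n‖ := by
      gcongr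
    calc (2*T)⁻¹ * (Real.exp (σ * f.lam n) * ‖∫ t in (-T)..T,
          Complex.exp ((Complex.I * ((f.lam n : ℂ) - f.lam N)) * t)‖ * ‖f.a n‖)
        ≤ (2*T)⁻¹ * (Real.exp (σ * f.lam n) * (2 / |f.lam n - f.lam N|) * ‖f.a n‖) := by
          apply mul_le_mul_of_nonneg_left h1 (by positivity)
      _ = (2*T)⁻¹ * (Real.exp (σ * f.lam n) * ‖f.a n‖ * (2 / |f.lam n - f.lam N|)) := by ring
  have hbound : ∀ T : ℝ, 0 < T → ∀ n,
      ‖((2*T:ℂ))⁻¹ • ∫ t in Set.Ioc (-T) T, w n t‖ ≤ Real.exp (σ * f.lam n) * ‖f.a n‖ := by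
    intro T hT n
    rw [norm_smul, h2T T hT]
    have h1 : ‖∫ t in Set.Ioc (-T) T, w n t‖ ≤ (Real.exp (σ * f.lam n) * ‖f.a n‖) * (2*T) := by
      rw [← intervalIntegral.integral_of_le (by linarith : -T ≤ T)]
      have := intervalIntegral.norm_integral_le_of_norm_le_const
        (C := Real.exp (σ * f.lam n) * ‖f.a n‖) (f := fun t => w n t) (a := -T) (b := T)
        (fun x _ => le_of_eq (hwnorm n x))
      refine this.trans (le_of_eq ?_)
      rw [show |(T : ℝ) - -T| = 2*T by rw [abs_of_pos (by linarith)]; ring]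
    calc (2*T)⁻¹ * ‖∫ t in Set.Ioc (-T) T, w n t‖
        ≤ (2*T)⁻¹ * ((Real.exp (σ * f.lam n) * ‖f.a n‖) * (2*T)) := by
          apply mul_le_mul_of_nonneg_left h1 (by positivity)
      _ = Real.exp (σ * f.lam n) * ‖f.a n‖ := by field_simp
  have hA : Tendsto (fun T : ℝ => ((2*T:ℂ))⁻¹ • ∫ t in Set.Ioc (-T) T, (∑' n, w n t)) atTop
      (𝓝 (Complex.exp ((σ : ℂ) * f.lam N) • f.a N)) := by
    have heq : (fun T : ℝ => ∑' n, ((2*T:ℂ))⁻¹ • ∫ t in Set.Ioc (-T) T, w n t) =ᶠ[atTop]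
        (fun T : ℝ => ((2*T:ℂ))⁻¹ • ∫ t in Set.Ioc (-T) T, (∑' n, w n t)) := by
      filter_upwards [eventually_gt_atTop 0] with T hT
      rw [key T hT, ← tsum_const_smul'']
    apply Filter.Tendsto.congr' heq
    rw [show Complex.exp ((σ : ℂ) * f.lam N) • f.a N =
        ∑' n, (if n = N then Complex.exp ((σ : ℂ) * f.lam N) • f.a N else 0) from
        (tsum_ite_eq N (fun _ => Complex.exp ((σ : ℂ) * f.lam N) • f.a N)).symm]
    apply tendsto_tsum_of_dominated_convergence (f.summable_S σ)
    · intro n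
      by_cases hn : n = N
      · subst hn
        simp only [if_pos rfl]
        apply Filter.Tendsto.congr' _ tendsto_const_nhds
        filter_upwards [eventually_gt_atTop 0] with T hT
        exact (hvalN T hT).symm
      · simp only [if_neg hn]
        apply squeeze_zero_norm' (f := fun T : ℝ => ((2*T:ℂ))⁻¹ • ∫ t in Set.Ioc (-T) T, w n t)
          (a := fun T : ℝ => (2*T)⁻¹ * (Real.exp (σ * f.lam n) * ‖f.a n‖ * (2 / |f.lam n - f.lam N|)))
        · filter_upwards [eventually_gt_atTop 0] with T hT
          exact hvalNe n hn T hT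
        · rw [show (0:ℝ) = 0 * (Real.exp (σ * f.lam n) * ‖f.a n‖ * (2 / |f.lam n - f.lam N|)) by ring]
          apply Filter.Tendsto.mul_const
          have : Tendsto (fun T : ℝ => 2*T) atTop atTop :=
            (tendsto_id.const_mul_atTop (by norm_num))
          exact tendsto_inv_atTop_zero.comp this
    · filter_upwards [eventually_gt_atTop 0] with T hT n
      exact hbound T hT n
  have hMb : ∀ᶠ T : ℝ in atTop, ‖((2*T:ℂ))⁻¹ • ∫ t in Set.Ioc (-T) T, (∑' n, w n t)‖ ≤ f.M σ := by
    filter_upwards [eventually_gt_atTop 0] with T hT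
    rw [norm_smul, h2T T hT]
    have h1 : ‖∫ t in Set.Ioc (-T) T, (∑' n, w n t)‖ ≤ f.M σ * (2*T) := by
      rw [← intervalIntegral.integral_of_le (by linarith : -T ≤ T)]
      have := intervalIntegral.norm_integral_le_of_norm_le_const
        (C := f.M σ) (f := fun t => ∑' n, w n t) (a := -T) (b := T) ?_
      · refine this.trans (le_of_eq ?_)
        rw [show |(T : ℝ) - -T| = 2*T by rw [abs_of_pos (by linarith)]; ring]
      · intro x _
        show ‖∑' (n : ℕ), w n x‖ ≤ f.M σ
        rw [hsum x, norm_smul]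
        have he1 : ‖Complex.exp (-((x : ℂ) * f.lam N * Complex.I))‖ = 1 := by
          rw [Complex.norm_exp]
          have : (-((x : ℂ) * f.lam N * Complex.I)).re = 0 := by
            simp [Complex.mul_re, Complex.mul_im]
          rw [this, Real.exp_zero]
        rw [he1, one_mul]
        exact f.norm_le_M σ x
    have hMnn : 0 ≤ f.M σ := by
      have h0 := f.norm_le_M σ 0
      exact le_trans (norm_nonneg _) h0
    calc (2*T)⁻¹ * ‖∫ t in Set.Ioc (-T) T, (∑' n, w n t)‖
        ≤ (2*T)⁻¹ * (f.M σ * (2*T)) := by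
          apply mul_le_mul_of_nonneg_left h1 (by positivity)
      _ = f.M σ := by field_simp
  have hfin := le_of_tendsto hA.norm hMb
  rw [norm_smul] at hfin
  have hexp : ‖Complex.exp ((σ : ℂ) * f.lam N)‖ = Real.exp (σ * f.lam N) := by
    rw [Complex.norm_exp]
    congr 1
    simp [Complex.mul_re]
  rwa [hexp] at hfin

end VVDS
namespace VVDS

variable (f : VVDS E)

lemma exists_coeff_ne_zero : ∃ N, f.a N ≠ 0 := by
  have h := f.coeff_decay.eventually_le_atBot (-1)
  obtain ⟨n, hn⟩ := h.exists
  refine ⟨n, fun hc => ?_⟩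
  rw [hc] at hn
  norm_num [Real.log_zero] at hn

lemma tendsto_M : Tendsto f.M atTop atTop := by
  obtain ⟨N, hN⟩ := f.exists_coeff_ne_zero
  have hc : 0 < ‖f.a N‖ := norm_pos_iff.mpr hN
  have hble : ∀ σ, Real.exp (σ * f.lam N) * ‖f.a N‖ ≤ f.M σ := fun σ => f.bohr N σ
  apply tendsto_atTop_mono hble
  apply Tendsto.atTop_mul_const hc
  exact Real.tendsto_exp_atTop.comp (Tendsto.atTop_mul_const (f.lam_pos N) tendsto_id)

lemma exists_M_ge (y : ℝ) : ∃ σ, y ≤ f.M σ :=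
  (f.tendsto_M.eventually_ge_atTop y).exists

lemma setM_nonempty (y : ℝ) : {σ : ℝ | y ≤ f.M σ}.Nonempty := f.exists_M_ge y

lemma lb_setM {y T : ℝ} (hy : f.S T < y) : ∀ σ ∈ {σ : ℝ | y ≤ f.M σ}, T ≤ σ := by
  intro σ hσ
  by_contra hc
  push_neg at hc
  exact absurd hσ (not_le.mpr (lt_of_le_of_lt (f.M_le_S_of_le hc.le) hy))

lemma bddBelow_setM {y T : ℝ} (hy : f.S T < y) : BddBelow {σ : ℝ | y ≤ f.M σ} :=
  ⟨T, fun σ hσ => f.lb_setM hy σ hσ⟩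

lemma le_Minv {y T : ℝ} (hy : f.S T < y) : T ≤ f.Minv y :=
  le_csInf (f.setM_nonempty y) (f.lb_setM hy)

lemma Minv_mono {y z : ℝ} (hyz : y ≤ z) {T : ℝ} (hy : f.S T < y) : f.Minv y ≤ f.Minv z :=
  csInf_le_csInf (f.bddBelow_setM hy) (f.setM_nonempty z) (fun σ hσ => le_trans hyz hσ)

lemma M_lt_of_lt_Minv {y τ T : ℝ} (hy : f.S T < y) (hτ : τ < f.Minv y) : f.M τ < y := by
  by_contra hc
  push_neg at hc
  exact absurd (csInf_le (f.bddBelow_setM hy) hc) (not_le.mpr hτ)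

lemma exists_le_Minv_add_one {y T : ℝ} (hy : f.S T < y) :
    ∃ τ, y ≤ f.M τ ∧ τ < f.Minv y + 1 := by
  have := (csInf_lt_iff (f.bddBelow_setM hy) (f.setM_nonempty y)).mp
    (lt_add_of_pos_right _ one_pos : sInf {σ : ℝ | y ≤ f.M σ} < f.Minv y + 1)
  obtain ⟨τ, hτ1, hτ2⟩ := this
  exact ⟨τ, hτ1, hτ2⟩

end VVDS

/-- composition tendsto -/
lemma tendsto_Minv_comp (f : VVDS E) (g : VVDS F) :
    Tendsto (fun σ => g.Minv (f.M σ)) atTop atTop := by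
  rw [tendsto_atTop]
  intro T
  filter_upwards [f.tendsto_M.eventually_gt_atTop (g.S T)] with σ hσ
  exact g.le_Minv hσ
section LogIter

/-- Iterated exponential threshold. -/
def eIter (k : ℕ) : ℝ := Real.exp^[k] 1

lemma eIter_succ (k : ℕ) : eIter (k+1) = Real.exp (eIter k) := by
  rw [eIter, Function.iterate_succ_apply', eIter]

lemma one_le_eIter (k : ℕ) : 1 ≤ eIter k := by
  induction k with
  | zero => simp [eIter]
  | succ k ih =>
    rw [eIter_succ]
    calc (1:ℝ) ≤ 1 + eIter k := by linarith
      _ ≤ Real.exp (eIter k) := by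
          have := Real.add_one_le_exp (eIter k); linarith

lemma logIter_mono {k : ℕ} : ∀ {a b : ℝ}, eIter k ≤ a → a ≤ b →
    Real.log^[k] a ≤ Real.log^[k] b := by
  induction k with
  | zero => intro a b _ hab; simpa using hab
  | succ k ih =>
    intro a b ha hab
    rw [Function.iterate_succ_apply, Function.iterate_succ_apply]
    have hpos : (0:ℝ) < a := lt_of_lt_of_le (by
      have h1 := one_le_eIter (k+1); linarith) ha
    have h1 : eIter k ≤ Real.log a := by
      have : Real.exp (eIter k) ≤ a := le_trans (le_of_eq (eIter_succ k).symm) ha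
      calc eIter k = Real.log (Real.exp (eIter k)) := (Real.log_exp _).symm
        _ ≤ Real.log a := Real.log_le_log (Real.exp_pos _) this
    exact ih h1 (Real.log_le_log hpos hab)

lemma one_le_logIter {k : ℕ} : ∀ {a : ℝ}, eIter k ≤ a → 1 ≤ Real.log^[k] a := by
  induction k with
  | zero => intro a h; simpa [eIter] using h
  | succ k ih =>
    intro a ha
    rw [Function.iterate_succ_apply]
    apply ih
    have : Real.exp (eIter k) ≤ a := le_trans (le_of_eq (eIter_succ k).symm) ha
    calc eIter k = Real.log (Real.exp (eIter k)) := (Real.log_exp _).symm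
      _ ≤ Real.log a := Real.log_le_log (Real.exp_pos _) this

lemma tendsto_logIter (k : ℕ) : Filter.Tendsto (Real.log^[k]) Filter.atTop Filter.atTop := by
  induction k with
  | zero => simpa using Filter.tendsto_id
  | succ k ih =>
    rw [Function.iterate_succ]
    exact ih.comp Real.tendsto_log_atTop

lemma logIter_sub_one (k : ℕ) : ∃ D : ℝ, ∀ x, D ≤ x →
    Real.log^[k] x - 1 ≤ Real.log^[k] (x - 1) := by
  induction k with
  | zero => exact ⟨0, fun x _ => by simp⟩
  | succ k ih =>
    obtain ⟨D, hD⟩ := ih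
    refine ⟨Real.exp (max D (eIter k) + 1), fun x hx => ?_⟩
    have hek := one_le_eIter k
    have hlogx : max D (eIter k) + 1 ≤ Real.log x := by
      calc max D (eIter k) + 1 = Real.log (Real.exp (max D (eIter k) + 1)) :=
            (Real.log_exp _).symm
        _ ≤ Real.log x := Real.log_le_log (Real.exp_pos _) hx
    have hx3 : (3:ℝ) ≤ x := by
      have h1 : Real.exp 2 ≤ Real.exp (max D (eIter k) + 1) := by
        apply Real.exp_le_exp.mpr
        have := le_max_right D (eIter k); linarith
      have h2 : (3:ℝ) ≤ Real.exp 2 := by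
        have := Real.add_one_le_exp (2:ℝ); linarith
      linarith
    -- log (x-1) ≥ log x - 1
    have hstep : Real.log x - 1 ≤ Real.log (x - 1) := by
      have hxm1 : (0:ℝ) < x - 1 := by linarith
      have hle : x ≤ Real.exp 1 * (x - 1) := by
        have h2 : (2:ℝ) ≤ Real.exp 1 := by
          have := Real.add_one_le_exp (1:ℝ); linarith
        nlinarith
      have := Real.log_le_log (by linarith : (0:ℝ) < x) hle
      rw [Real.log_mul (Real.exp_ne_zero 1) (ne_of_gt hxm1), Real.log_exp] at this
      linarith
    rw [Function.iterate_succ_apply, Function.iterate_succ_apply]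
    calc Real.log^[k] (Real.log x) - 1 ≤ Real.log^[k] (Real.log x - 1) := by
          apply hD; linarith [le_max_left D (eIter k)]
      _ ≤ Real.log^[k] (Real.log (x-1)) := by
          apply logIter_mono ?_ hstep
          linarith [le_max_right D (eIter k)]

lemma logIter_add_one (k : ℕ) : ∃ D : ℝ, ∀ x, D ≤ x →
    Real.log^[k] (x + 1) ≤ Real.log^[k] x + 1 := by
  induction k with
  | zero => exact ⟨0, fun x _ => by simp⟩
  | succ k ih =>
    obtain ⟨D, hD⟩ := ih
    refine ⟨Real.exp (max D (eIter k)), fun x hx => ?_⟩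
    have hek := one_le_eIter k
    have hxpos : (0:ℝ) < x := lt_of_lt_of_le (Real.exp_pos _) hx
    have hlogx : max D (eIter k) ≤ Real.log x := by
      calc max D (eIter k) = Real.log (Real.exp (max D (eIter k))) := (Real.log_exp _).symm
        _ ≤ Real.log x := Real.log_le_log (Real.exp_pos _) hx
    have hx1 : (1:ℝ) ≤ x := by
      have h1 : Real.exp 1 ≤ Real.exp (max D (eIter k)) := by
        apply Real.exp_le_exp.mpr
        have := le_max_right D (eIter k); linarith
      have h2 : (1:ℝ) ≤ Real.exp 1 := by
        have := Real.add_one_le_exp (1:ℝ); linarith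
      linarith
    have hstep : Real.log (x + 1) ≤ Real.log x + 1 := by
      have hle : x + 1 ≤ Real.exp 1 * x := by
        have h2 : (2:ℝ) ≤ Real.exp 1 := by
          have := Real.add_one_le_exp (1:ℝ); linarith
        nlinarith
      have := Real.log_le_log (by linarith : (0:ℝ) < x + 1) hle
      rw [Real.log_mul (Real.exp_ne_zero 1) (ne_of_gt hxpos), Real.log_exp] at this
      linarith
    rw [Function.iterate_succ_apply, Function.iterate_succ_apply]
    calc Real.log^[k] (Real.log (x+1)) ≤ Real.log^[k] (Real.log x + 1) := by
          apply logIter_mono ?_ hstep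
          calc eIter k ≤ Real.log x := le_trans (le_max_right _ _) hlogx
            _ ≤ Real.log (x+1) := Real.log_le_log hxpos (by linarith)
      _ ≤ Real.log^[k] (Real.log x) + 1 := by
          apply hD; linarith [le_max_left D (eIter k)]

end LogIter
section Core

lemma coreLower (f : VVDS E) (g : VVDS F) (h : VVDS G) (p q m : ℕ) {a b : ℝ}
    (hb : 0 < b)
    (hf_low : ∀ᶠ σ in atTop, a * Real.log^[q] σ ≤ Real.log^[m] (h.Minv (f.M σ)))
    (hg_up : ∀ᶠ τ in atTop, Real.log^[m] (h.Minv (g.M τ)) ≤ b * Real.log^[p] τ)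
    {ε : ℝ} (hε : 0 < ε) :
    ∀ᶠ σ in atTop, a / b - ε ≤ Real.log^[p] (g.Minv (f.M σ)) / Real.log^[q] σ := by
  obtain ⟨D₁, hD₁⟩ := logIter_add_one p
  obtain ⟨R, hR⟩ := eventually_atTop.mp hg_up
  set R' := max R (eIter p) with hR'
  filter_upwards [hf_low,
    f.tendsto_M.eventually_gt_atTop (g.S R'),
    f.tendsto_M.eventually_gt_atTop (g.S 0),
    f.tendsto_M.eventually_gt_atTop (h.S 0),
    (tendsto_Minv_comp f h).eventually_ge_atTop (eIter m),
    (tendsto_Minv_comp f g).eventually_ge_atTop D₁,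
    (tendsto_logIter q).eventually_ge_atTop (max 1 (1/ε))] with σ
      hflow hMR' hMg0 hMh0 hMinvm hD1u hlogq
  obtain ⟨τ, hτM, hτlt⟩ := g.exists_le_Minv_add_one (T := 0) hMg0
  have hτR' : R' ≤ τ := g.lb_setM hMR' τ hτM
  have h1 : h.Minv (f.M σ) ≤ h.Minv (g.M τ) := h.Minv_mono hτM (T := 0) hMh0
  have h2 : Real.log^[m] (h.Minv (f.M σ)) ≤ Real.log^[m] (h.Minv (g.M τ)) :=
    logIter_mono hMinvm h1
  have h3 : Real.log^[m] (h.Minv (g.M τ)) ≤ b * Real.log^[p] τ :=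
    hR τ (le_trans (le_max_left _ _) hτR')
  have h4 : Real.log^[p] τ ≤ Real.log^[p] (g.Minv (f.M σ) + 1) :=
    logIter_mono (le_trans (le_max_right _ _) hτR') hτlt.le
  have h5 : Real.log^[p] (g.Minv (f.M σ) + 1) ≤ Real.log^[p] (g.Minv (f.M σ)) + 1 :=
    hD₁ _ hD1u
  have hchain : a * Real.log^[q] σ ≤ b * (Real.log^[p] (g.Minv (f.M σ)) + 1) := by
    calc a * Real.log^[q] σ ≤ Real.log^[m] (h.Minv (f.M σ)) := hflow
      _ ≤ Real.log^[m] (h.Minv (g.M τ)) := h2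
      _ ≤ b * Real.log^[p] τ := h3
      _ ≤ b * (Real.log^[p] (g.Minv (f.M σ)) + 1) := by
          apply mul_le_mul_of_nonneg_left (h4.trans h5) hb.le
  have hlq1 : 1 ≤ Real.log^[q] σ := le_trans (le_max_left _ _) hlogq
  have hlqε : 1 / ε ≤ Real.log^[q] σ := le_trans (le_max_right _ _) hlogq
  have hlqpos : (0:ℝ) < Real.log^[q] σ := by linarith
  have hAL : (a / b) * Real.log^[q] σ ≤ Real.log^[p] (g.Minv (f.M σ)) + 1 := by
    rw [div_mul_eq_mul_div, div_le_iff₀ hb]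
    calc a * Real.log^[q] σ ≤ b * (Real.log^[p] (g.Minv (f.M σ)) + 1) := hchain
      _ = (Real.log^[p] (g.Minv (f.M σ)) + 1) * b := by ring
  have h6 : a / b - 1 / Real.log^[q] σ ≤ Real.log^[p] (g.Minv (f.M σ)) / Real.log^[q] σ := by
    rw [sub_le_iff_le_add, ← add_div, le_div_iff₀ hlqpos]
    exact hAL
  have h7 : 1 / Real.log^[q] σ ≤ ε := by
    rw [div_le_iff₀ hlqpos]
    have h8 : (1/ε) * ε ≤ Real.log^[q] σ * ε := by
      apply mul_le_mul_of_nonneg_right hlqε hε.le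
    rw [one_div, inv_mul_cancel₀ (ne_of_gt hε)] at h8
    linarith [h8]
  linarith

lemma coreUpper (f : VVDS E) (g : VVDS F) (h : VVDS G) (p q m : ℕ) {a b : ℝ}
    (hb : 0 < b)
    (hf_freq : ∃ᶠ σ in atTop, Real.log^[m] (h.Minv (f.M σ)) ≤ a * Real.log^[q] σ)
    (hg_low : ∀ᶠ τ in atTop, b * Real.log^[p] τ ≤ Real.log^[m] (h.Minv (g.M τ)))
    {ε : ℝ} (hε : 0 < ε) :
    ∃ᶠ σ in atTop, Real.log^[p] (g.Minv (f.M σ)) / Real.log^[q] σ ≤ a / b + ε := by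
  obtain ⟨D₂, hD₂⟩ := logIter_sub_one p
  obtain ⟨R, hR⟩ := eventually_atTop.mp hg_low
  have humo : Tendsto (fun σ => g.Minv (f.M σ) - 1) atTop atTop :=
    tendsto_atTop_add_const_right _ (-1) (tendsto_Minv_comp f g) |>.congr (by intro x; ring_nf)
  have hEv : ∀ᶠ σ in atTop,
      (g.S 0 < f.M σ) ∧ (h.S 0 < g.M (g.Minv (f.M σ) - 1)) ∧
      (eIter m ≤ h.Minv (g.M (g.Minv (f.M σ) - 1))) ∧
      (R ≤ g.Minv (f.M σ) - 1) ∧ (D₂ ≤ g.Minv (f.M σ)) ∧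
      (max 1 (1/ε) ≤ Real.log^[q] σ) := by
    have e1 := f.tendsto_M.eventually_gt_atTop (g.S 0)
    have e2 := (g.tendsto_M.comp humo).eventually_gt_atTop (h.S 0)
    have e3 := ((tendsto_Minv_comp g h).comp humo).eventually_ge_atTop (eIter m)
    have e4 := humo.eventually_ge_atTop R
    have e5 := (tendsto_Minv_comp f g).eventually_ge_atTop D₂
    have e6 := (tendsto_logIter q).eventually_ge_atTop (max 1 (1/ε))
    filter_upwards [e1, e2, e3, e4, e5, e6] with σ h1 h2 h3 h4 h5 h6
    exact ⟨h1, h2, h3, h4, h5, h6⟩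
  apply (hf_freq.and_eventually hEv).mono
  rintro σ ⟨hfreq, hMg0, hMgτ, hMinvm, hτR, hD2u, hlogq⟩
  set τ := g.Minv (f.M σ) - 1 with hτdef
  have hτlt : τ < g.Minv (f.M σ) := by rw [hτdef]; linarith
  have hgMτ : g.M τ < f.M σ := g.M_lt_of_lt_Minv (T := 0) hMg0 hτlt
  have h1 : h.Minv (g.M τ) ≤ h.Minv (f.M σ) := h.Minv_mono hgMτ.le (T := 0) hMgτ
  have h2 : Real.log^[m] (h.Minv (g.M τ)) ≤ Real.log^[m] (h.Minv (f.M σ)) :=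
    logIter_mono hMinvm h1
  have h3 : b * Real.log^[p] τ ≤ Real.log^[m] (h.Minv (g.M τ)) := hR τ hτR
  have h4 : Real.log^[p] (g.Minv (f.M σ)) - 1 ≤ Real.log^[p] τ := hD₂ _ hD2u
  have hchain : b * (Real.log^[p] (g.Minv (f.M σ)) - 1) ≤ a * Real.log^[q] σ := by
    calc b * (Real.log^[p] (g.Minv (f.M σ)) - 1) ≤ b * Real.log^[p] τ := by
          apply mul_le_mul_of_nonneg_left h4 hb.le
      _ ≤ Real.log^[m] (h.Minv (g.M τ)) := h3
      _ ≤ Real.log^[m] (h.Minv (f.M σ)) := h2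
      _ ≤ a * Real.log^[q] σ := hfreq
  have hlq1 : 1 ≤ Real.log^[q] σ := le_trans (le_max_left _ _) hlogq
  have hlqε : 1 / ε ≤ Real.log^[q] σ := le_trans (le_max_right _ _) hlogq
  have hlqpos : (0:ℝ) < Real.log^[q] σ := by linarith
  have hAL : Real.log^[p] (g.Minv (f.M σ)) ≤ (a / b) * Real.log^[q] σ + 1 := by
    rw [div_mul_eq_mul_div]
    rw [← sub_le_iff_le_add, le_div_iff₀ hb]
    calc (Real.log^[p] (g.Minv (f.M σ)) - 1) * b
        = b * (Real.log^[p] (g.Minv (f.M σ)) - 1) := by ring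
      _ ≤ a * Real.log^[q] σ := hchain
  have h7 : 1 / Real.log^[q] σ ≤ ε := by
    rw [div_le_iff₀ hlqpos]
    have h8 : (1/ε) * ε ≤ Real.log^[q] σ * ε := by
      apply mul_le_mul_of_nonneg_right hlqε hε.le
    rw [one_div, inv_mul_cancel₀ (ne_of_gt hε)] at h8
    linarith [h8]
  have h6 : Real.log^[p] (g.Minv (f.M σ)) / Real.log^[q] σ ≤ (a/b) + 1 / Real.log^[q] σ := by
    rw [div_le_iff₀ hlqpos, add_mul, div_mul_cancel₀ _ (ne_of_gt hlqpos)]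
    linarith [hAL]
  linarith

end Core
section Conv

variable {A B : Type*} [NormedAddCommGroup A] [NormedSpace ℂ A] [CompleteSpace A]
  [NormedAddCommGroup B] [NormedSpace ℂ B] [CompleteSpace B]

lemma conv_low (x : VVDS A) (h : VVDS B) (k m : ℕ) {L : ℝ}
    (hL : (L : EReal) ≤ relRittLowerOrder m k x h) {δ : ℝ} (hδ : 0 < δ) :
    ∀ᶠ σ in atTop, (L - δ) * Real.log^[k] σ ≤ Real.log^[m] (h.Minv (x.M σ)) := by
  rw [relRittLowerOrder] at hL
  have hlt : ((L - δ : ℝ) : EReal) <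
      liminf (fun σ : ℝ =>
        ((Real.log^[m] (h.Minv (x.M σ)) / Real.log^[k] σ : ℝ) : EReal)) atTop :=
    lt_of_lt_of_le (EReal.coe_lt_coe_iff.mpr (by linarith)) hL
  filter_upwards [eventually_lt_of_lt_liminf hlt,
    (tendsto_logIter k).eventually_gt_atTop 0] with σ h1 h2
  exact ((lt_div_iff₀ h2).mp (EReal.coe_lt_coe_iff.mp h1)).le

lemma conv_up (x : VVDS A) (h : VVDS B) (k m : ℕ) {R : ℝ}
    (hR : relRittOrder m k x h ≤ (R : EReal)) {δ : ℝ} (hδ : 0 < δ) :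
    ∀ᶠ σ in atTop, Real.log^[m] (h.Minv (x.M σ)) ≤ (R + δ) * Real.log^[k] σ := by
  rw [relRittOrder] at hR
  have hlt : limsup (fun σ : ℝ =>
      ((Real.log^[m] (h.Minv (x.M σ)) / Real.log^[k] σ : ℝ) : EReal)) atTop <
      ((R + δ : ℝ) : EReal) :=
    lt_of_le_of_lt hR (EReal.coe_lt_coe_iff.mpr (by linarith))
  filter_upwards [eventually_lt_of_limsup_lt hlt,
    (tendsto_logIter k).eventually_gt_atTop 0] with σ h1 h2
  exact ((div_lt_iff₀ h2).mp (EReal.coe_lt_coe_iff.mp h1)).le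

lemma conv_freq (x : VVDS A) (h : VVDS B) (k m : ℕ) {L : ℝ}
    (hL : relRittLowerOrder m k x h ≤ (L : EReal)) {δ : ℝ} (hδ : 0 < δ) :
    ∃ᶠ σ in atTop, Real.log^[m] (h.Minv (x.M σ)) ≤ (L + δ) * Real.log^[k] σ := by
  rw [relRittLowerOrder] at hL
  have hlt : liminf (fun σ : ℝ =>
      ((Real.log^[m] (h.Minv (x.M σ)) / Real.log^[k] σ : ℝ) : EReal)) atTop <
      ((L + δ : ℝ) : EReal) :=
    lt_of_le_of_lt hL (EReal.coe_lt_coe_iff.mpr (by linarith))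
  have hfreq := frequently_lt_of_liminf_lt (by isBoundedDefault) hlt
  apply (hfreq.and_eventually ((tendsto_logIter k).eventually_gt_atTop 0)).mono
  rintro σ ⟨h1, h2⟩
  exact ((div_lt_iff₀ h2).mp (EReal.coe_lt_coe_iff.mp h1)).le

end Conv
theorem stmt_6 (f : VVDS E) (g : VVDS F) (h : VVDS G) (p q m : ℕ)
    (hf1 : (0 : EReal) < relRittLowerOrder m q f h)
    (hf2 : relRittLowerOrder m q f h ≤ relRittOrder m q f h)
    (hf3 : relRittOrder m q f h < ⊤)
    (hg1 : (0 : EReal) < relRittLowerOrder m p g h)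
    (hg2 : relRittLowerOrder m p g h ≤ relRittOrder m p g h)
    (hg3 : relRittOrder m p g h < ⊤)
    :
    relRittLowerOrder p q f g * relRittLowerOrder q p g f ≤ 1 ∧ (relRittLowerOrder m q f h = relRittOrder m q f h → relRittLowerOrder m p g h = relRittOrder m p g h → relRittLowerOrder p q f g * relRittLowerOrder q p g f = 1) := by
  -- extract real constants
  have hfb : relRittLowerOrder m q f h ≠ ⊥ := (bot_le.trans_lt hf1).ne'
  have hft : relRittLowerOrder m q f h ≠ ⊤ := (hf2.trans_lt hf3).ne
  have hfRb : relRittOrder m q f h ≠ ⊥ := (bot_le.trans_lt (hf1.trans_le hf2)).ne'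
  have hfRt : relRittOrder m q f h ≠ ⊤ := hf3.ne
  have hgb : relRittLowerOrder m p g h ≠ ⊥ := (bot_le.trans_lt hg1).ne'
  have hgt : relRittLowerOrder m p g h ≠ ⊤ := (hg2.trans_lt hg3).ne
  have hgRb : relRittOrder m p g h ≠ ⊥ := (bot_le.trans_lt (hg1.trans_le hg2)).ne'
  have hgRt : relRittOrder m p g h ≠ ⊤ := hg3.ne
  set Lf := (relRittLowerOrder m q f h).toReal with hLfdef
  set Rf := (relRittOrder m q f h).toReal with hRfdef
  set Lg := (relRittLowerOrder m p g h).toReal with hLgdef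
  set Rg := (relRittOrder m p g h).toReal with hRgdef
  have hLfeq : relRittLowerOrder m q f h = (Lf : EReal) := (EReal.coe_toReal hft hfb).symm
  have hRfeq : relRittOrder m q f h = (Rf : EReal) := (EReal.coe_toReal hfRt hfRb).symm
  have hLgeq : relRittLowerOrder m p g h = (Lg : EReal) := (EReal.coe_toReal hgt hgb).symm
  have hRgeq : relRittOrder m p g h = (Rg : EReal) := (EReal.coe_toReal hgRt hgRb).symm
  have hLfpos : 0 < Lf := by
    have h0 : ((0:ℝ):EReal) < (Lf : EReal) := by
      rw [EReal.coe_zero, ← hLfeq]; exact hf1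
    exact EReal.coe_lt_coe_iff.mp h0
  have hLgpos : 0 < Lg := by
    have h0 : ((0:ℝ):EReal) < (Lg : EReal) := by
      rw [EReal.coe_zero, ← hLgeq]; exact hg1
    exact EReal.coe_lt_coe_iff.mp h0
  have hLfRf : Lf ≤ Rf := EReal.coe_le_coe_iff.mp (hLfeq ▸ hRfeq ▸ hf2)
  have hLgRg : Lg ≤ Rg := EReal.coe_le_coe_iff.mp (hLgeq ▸ hRgeq ▸ hg2)
  have hRfpos : 0 < Rf := lt_of_lt_of_le hLfpos hLfRf
  have hRgpos : 0 < Rg := lt_of_lt_of_le hLgpos hLgRg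
  -- hypothesis forms
  have hfL : (Lf : EReal) ≤ relRittLowerOrder m q f h := le_of_eq hLfeq.symm
  have hfLup : relRittLowerOrder m q f h ≤ (Lf : EReal) := le_of_eq hLfeq
  have hfRup : relRittOrder m q f h ≤ (Rf : EReal) := le_of_eq hRfeq
  have hgL : (Lg : EReal) ≤ relRittLowerOrder m p g h := le_of_eq hLgeq.symm
  have hgLup : relRittLowerOrder m p g h ≤ (Lg : EReal) := le_of_eq hLgeq
  have hgRup : relRittOrder m p g h ≤ (Rg : EReal) := le_of_eq hRgeq
  -- the four bounds
  have A1 : ((Lf / Rg : ℝ) : EReal) ≤ relRittLowerOrder p q f g := by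
    have hcont : Tendsto (fun δ : ℝ => ((Lf - δ)/(Rg + δ) - δ : ℝ))
        (nhdsWithin (0:ℝ) (Set.Ioi 0)) (nhds (Lf/Rg)) := by
      apply tendsto_nhdsWithin_of_tendsto_nhds
      have hc : ContinuousAt (fun δ : ℝ => ((Lf - δ)/(Rg + δ) - δ : ℝ)) 0 :=
        ((continuousAt_const.sub continuousAt_id).div
          (continuousAt_const.add continuousAt_id)
          (by simpa using (ne_of_gt hRgpos))).sub continuousAt_id
      have := hc.tendsto
      simpa using this
    apply le_of_tendsto ((continuous_coe_real_ereal.tendsto _).comp hcont)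
    filter_upwards [self_mem_nhdsWithin] with δ hδ
    have hδpos : (0:ℝ) < δ := hδ
    have hcore := coreLower f g h p q m (by linarith : (0:ℝ) < Rg + δ)
      (conv_low f h q m hfL hδpos) (conv_up g h p m hgRup hδpos) hδpos
    show ((((Lf - δ)/(Rg + δ) - δ : ℝ)) : EReal) ≤ relRittLowerOrder p q f g
    rw [relRittLowerOrder]
    exact le_liminf_of_le (by isBoundedDefault)
      (hcore.mono fun σ hσ => EReal.coe_le_coe_iff.mpr hσ)
  have A2 : relRittLowerOrder p q f g ≤ ((Lf / Lg : ℝ) : EReal) := by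
    have hcont : Tendsto (fun δ : ℝ => ((Lf + δ)/(Lg - δ) + δ : ℝ))
        (nhdsWithin (0:ℝ) (Set.Ioi 0)) (nhds (Lf/Lg)) := by
      apply tendsto_nhdsWithin_of_tendsto_nhds
      have hc : ContinuousAt (fun δ : ℝ => ((Lf + δ)/(Lg - δ) + δ : ℝ)) 0 :=
        ((continuousAt_const.add continuousAt_id).div
          (continuousAt_const.sub continuousAt_id)
          (by simpa using (ne_of_gt hLgpos))).add continuousAt_id
      have := hc.tendsto
      simpa using this
    apply ge_of_tendsto ((continuous_coe_real_ereal.tendsto _).comp hcont)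
    filter_upwards [self_mem_nhdsWithin,
      Ioo_mem_nhdsGT_of_mem (show (0:ℝ) ∈ Set.Ico 0 Lg from ⟨le_refl 0, hLgpos⟩)]
      with δ hδ1 hδ2
    have hδpos : (0:ℝ) < δ := hδ1
    have hLgδ : 0 < Lg - δ := by have := hδ2.2; linarith
    have hcore := coreUpper f g h p q m hLgδ
      (conv_freq f h q m hfLup hδpos) (conv_low g h p m hgL hδpos) hδpos
    show relRittLowerOrder p q f g ≤ ((((Lf + δ)/(Lg - δ) + δ : ℝ)) : EReal)
    rw [relRittLowerOrder]
    exact liminf_le_of_frequently_le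
      (hcore.mono fun σ hσ => EReal.coe_le_coe_iff.mpr hσ) (by isBoundedDefault)
  have B1 : ((Lg / Rf : ℝ) : EReal) ≤ relRittLowerOrder q p g f := by
    have hcont : Tendsto (fun δ : ℝ => ((Lg - δ)/(Rf + δ) - δ : ℝ))
        (nhdsWithin (0:ℝ) (Set.Ioi 0)) (nhds (Lg/Rf)) := by
      apply tendsto_nhdsWithin_of_tendsto_nhds
      have hc : ContinuousAt (fun δ : ℝ => ((Lg - δ)/(Rf + δ) - δ : ℝ)) 0 :=
        ((continuousAt_const.sub continuousAt_id).div
          (continuousAt_const.add continuousAt_id)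
          (by simpa using (ne_of_gt hRfpos))).sub continuousAt_id
      have := hc.tendsto
      simpa using this
    apply le_of_tendsto ((continuous_coe_real_ereal.tendsto _).comp hcont)
    filter_upwards [self_mem_nhdsWithin] with δ hδ
    have hδpos : (0:ℝ) < δ := hδ
    have hcore := coreLower g f h q p m (by linarith : (0:ℝ) < Rf + δ)
      (conv_low g h p m hgL hδpos) (conv_up f h q m hfRup hδpos) hδpos
    show ((((Lg - δ)/(Rf + δ) - δ : ℝ)) : EReal) ≤ relRittLowerOrder q p g f
    rw [relRittLowerOrder]
    exact le_liminf_of_le (by isBoundedDefault)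
      (hcore.mono fun σ hσ => EReal.coe_le_coe_iff.mpr hσ)
  have B2 : relRittLowerOrder q p g f ≤ ((Lg / Lf : ℝ) : EReal) := by
    have hcont : Tendsto (fun δ : ℝ => ((Lg + δ)/(Lf - δ) + δ : ℝ))
        (nhdsWithin (0:ℝ) (Set.Ioi 0)) (nhds (Lg/Lf)) := by
      apply tendsto_nhdsWithin_of_tendsto_nhds
      have hc : ContinuousAt (fun δ : ℝ => ((Lg + δ)/(Lf - δ) + δ : ℝ)) 0 :=
        ((continuousAt_const.add continuousAt_id).div
          (continuousAt_const.sub continuousAt_id)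
          (by simpa using (ne_of_gt hLfpos))).add continuousAt_id
      have := hc.tendsto
      simpa using this
    apply ge_of_tendsto ((continuous_coe_real_ereal.tendsto _).comp hcont)
    filter_upwards [self_mem_nhdsWithin,
      Ioo_mem_nhdsGT_of_mem (show (0:ℝ) ∈ Set.Ico 0 Lf from ⟨le_refl 0, hLfpos⟩)]
      with δ hδ1 hδ2
    have hδpos : (0:ℝ) < δ := hδ1
    have hLfδ : 0 < Lf - δ := by have := hδ2.2; linarith
    have hcore := coreUpper g f h q p m hLfδ
      (conv_freq g h p m hgLup hδpos) (conv_low f h q m hfL hδpos) hδpos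
    show relRittLowerOrder q p g f ≤ ((((Lg + δ)/(Lf - δ) + δ : ℝ)) : EReal)
    rw [relRittLowerOrder]
    exact liminf_le_of_frequently_le
      (hcore.mono fun σ hσ => EReal.coe_le_coe_iff.mpr hσ) (by isBoundedDefault)
  -- finiteness of both lower orders
  have hPb : relRittLowerOrder p q f g ≠ ⊥ := ((EReal.bot_lt_coe _).trans_le A1).ne'
  have hPt : relRittLowerOrder p q f g ≠ ⊤ := (A2.trans_lt (EReal.coe_lt_top _)).ne
  have hQb : relRittLowerOrder q p g f ≠ ⊥ := ((EReal.bot_lt_coe _).trans_le B1).ne'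
  have hQt : relRittLowerOrder q p g f ≠ ⊤ := (B2.trans_lt (EReal.coe_lt_top _)).ne
  set pr := (relRittLowerOrder p q f g).toReal with hprdef
  set qr := (relRittLowerOrder q p g f).toReal with hqrdef
  have hPeq : relRittLowerOrder p q f g = (pr : EReal) := (EReal.coe_toReal hPt hPb).symm
  have hQeq : relRittLowerOrder q p g f = (qr : EReal) := (EReal.coe_toReal hQt hQb).symm
  have hpr1 : Lf / Rg ≤ pr := EReal.coe_le_coe_iff.mp (hPeq ▸ A1)
  have hpr2 : pr ≤ Lf / Lg := EReal.coe_le_coe_iff.mp (hPeq ▸ A2)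
  have hqr1 : Lg / Rf ≤ qr := EReal.coe_le_coe_iff.mp (hQeq ▸ B1)
  have hqr2 : qr ≤ Lg / Lf := EReal.coe_le_coe_iff.mp (hQeq ▸ B2)
  have hprpos : 0 < pr := lt_of_lt_of_le (div_pos hLfpos hRgpos) hpr1
  have hqrpos : 0 < qr := lt_of_lt_of_le (div_pos hLgpos hRfpos) hqr1
  constructor
  · rw [hPeq, hQeq, ← EReal.coe_mul]
    have hmul : pr * qr ≤ 1 := by
      calc pr * qr ≤ (Lf/Lg) * (Lg/Lf) :=
            mul_le_mul hpr2 hqr2 hqrpos.le (by positivity)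
        _ = 1 := by field_simp
    exact (EReal.coe_le_coe_iff.mpr hmul).trans_eq EReal.coe_one
  · intro hregf hregg
    have hRfLf : Rf = Lf := by
      have : (Lf : EReal) = (Rf : EReal) := by rw [← hLfeq, ← hRfeq]; exact hregf
      exact (EReal.coe_eq_coe_iff.mp this).symm
    have hRgLg : Rg = Lg := by
      have : (Lg : EReal) = (Rg : EReal) := by rw [← hLgeq, ← hRgeq]; exact hregg
      exact (EReal.coe_eq_coe_iff.mp this).symm
    have hPv : relRittLowerOrder p q f g = ((Lf / Lg : ℝ) : EReal) := by
      apply le_antisymm A2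
      rw [← hRgLg]; exact A1
    have hQv : relRittLowerOrder q p g f = ((Lg / Lf : ℝ) : EReal) := by
      apply le_antisymm B2
      rw [← hRfLf]; exact B1
    rw [hPv, hQv, ← EReal.coe_mul,
      show (Lf/Lg) * (Lg/Lf) = 1 by field_simp]
    exact EReal.coe_one
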